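/- Define h_k(j,s) := (c_k(j,s) − θ c_k(j_k,s_k)) / (1 − θ) with θ = c_k(j,s)ᵀc_k(j_k,s_k)/‖c_k(j_k,s_k)‖². Then for j ∉ M_k, h_k(j,s) = c_{k+1}(j,s), where c_l(j,s) = P^⊥_{l-1}X_j / (s − X_jᵀ(X_{M_{l-1}}^+)ᵀ s_{M_{l-1}}) and M_k = M_{k-1} ∪ {j_k}. -/

import Mathlib

open Matrix

/-- Lemma `h_k(j,s) = c_{k+1}(j,s)`: with
`c_l(j,s) = P^⊥_{l-1}X_j/(s - X_jᵀ(X_{M_{l-1}}^+)ᵀ s_{M_{l-1}})`, `M_k = M_{k-1} ∪ {j_k}`,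
`θ = c_k(j,s)ᵀc_k(j_k,s_k)/‖c_k(j_k,s_k)‖²`, and
`h_k(j,s) = (c_k(j,s) - θ c_k(j_k,s_k))/(1 - θ)`, we have `h_k(j,s) = c_{k+1}(j,s)`.
Here `X1 = X_{M_{k-1}}`, `XM = [X1, x_{j_k}] = X_{M_k}`, `xj = X_j` with `j ∉ M_k`. -/
theorem h_eq_c_next (n m : ℕ)
    (X1 : Matrix (Fin n) (Fin m) ℝ) (xjk xj : Fin n → ℝ)
    (XM : Matrix (Fin n) (Fin (m + 1)) ℝ) (hXMdef : ∀ i, XM i = Fin.snoc (X1 i) (xjk i))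
    (hX1 : IsUnit (X1ᵀ * X1).det) (hXM : IsUnit (XMᵀ * XM).det)
    (s1 : Fin m → ℝ) (sk s : ℝ) (sM : Fin (m + 1) → ℝ) (hsM : sM = Fin.snoc s1 sk)
    (P1 PM : Matrix (Fin n) (Fin n) ℝ)
    (hP1 : P1 = X1 * (X1ᵀ * X1)⁻¹ * X1ᵀ) (hPM : PM = XM * (XMᵀ * XM)⁻¹ * XMᵀ)
    (dk dj dM : ℝ)
    (hdk : dk = sk - xjk ⬝ᵥ (X1 * (X1ᵀ * X1)⁻¹).mulVec s1) (hdk0 : dk ≠ 0)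
    (hdj : dj = s - xj ⬝ᵥ (X1 * (X1ᵀ * X1)⁻¹).mulVec s1) (hdj0 : dj ≠ 0)
    (hdM : dM = s - xj ⬝ᵥ (XM * (XMᵀ * XM)⁻¹).mulVec sM) (hdM0 : dM ≠ 0)
    (ck ckk ck1 : Fin n → ℝ)
    (hck : ck = dj⁻¹ • ((1 : Matrix (Fin n) (Fin n) ℝ) - P1).mulVec xj)
    (hckk : ckk = dk⁻¹ • ((1 : Matrix (Fin n) (Fin n) ℝ) - P1).mulVec xjk)
    (hck1 : ck1 = dM⁻¹ • ((1 : Matrix (Fin n) (Fin n) ℝ) - PM).mulVec xj)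
    (θ : ℝ) (hθ : θ = (ck ⬝ᵥ ckk) / (ckk ⬝ᵥ ckk)) (hθ1 : θ ≠ 1) (hckk0 : ckk ≠ 0) :
    (1 - θ)⁻¹ • (ck - θ • ckk) = ck1 := by
  set Ai := (X1ᵀ * X1)⁻¹ with hAidef
  have hAA : (X1ᵀ * X1) * Ai = 1 := Matrix.mul_nonsing_inv _ hX1
  have hAA' : Ai * (X1ᵀ * X1) = 1 := Matrix.nonsing_inv_mul _ hX1
  have hAisym : Aiᵀ = Ai := by
    rw [hAidef, Matrix.transpose_nonsing_inv, Matrix.transpose_mul,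
      Matrix.transpose_transpose]
  have hAidot : ∀ w z : Fin m → ℝ, w ⬝ᵥ Ai *ᵥ z = (Ai *ᵥ w) ⬝ᵥ z := by
    intro w z
    rw [dotProduct_mulVec, ← mulVec_transpose, hAisym]
  set b := X1ᵀ *ᵥ xjk with hbdef
  set u := Ai *ᵥ b with hudef
  set γ := xjk ⬝ᵥ xjk - b ⬝ᵥ u with hγdef
  set q := xjk - X1 *ᵥ u with hqdef
  set bj := X1ᵀ *ᵥ xj with hbjdef
  set r := xj - X1 *ᵥ (Ai *ᵥ bj) with hrdef
  set α := q ⬝ᵥ xj with hαdef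
  have hAu : (X1ᵀ * X1) *ᵥ u = b := by
    rw [hudef, mulVec_mulVec, hAA, one_mulVec]
  have hX1q : X1ᵀ *ᵥ q = 0 := by
    rw [hqdef, mulVec_sub, mulVec_mulVec, hAu, sub_self]
  have hqX1 : ∀ z : Fin m → ℝ, q ⬝ᵥ (X1 *ᵥ z) = 0 := by
    intro z
    rw [dotProduct_mulVec, ← mulVec_transpose, hX1q, zero_dotProduct]
  have hq2 : q ⬝ᵥ q = γ := by
    nth_rewrite 2 [hqdef]
    rw [dotProduct_sub, hqX1, sub_zero, hqdef, sub_dotProduct, hγdef]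
    congr 1
    rw [dotProduct_comm, dotProduct_mulVec, ← mulVec_transpose]
  have hP1mv : ∀ z : Fin n → ℝ, P1 *ᵥ z = X1 *ᵥ (Ai *ᵥ (X1ᵀ *ᵥ z)) := by
    intro z
    rw [hP1, ← mulVec_mulVec, ← mulVec_mulVec]
  have hckkq : ckk = dk⁻¹ • q := by
    rw [hckk, sub_mulVec, one_mulVec, hP1mv, hqdef]
  have hckr : ck = dj⁻¹ • r := by
    rw [hck, sub_mulVec, one_mulVec, hP1mv, hrdef]
  have hq0 : q ≠ 0 := by
    intro h
    exact hckk0 (by rw [hckkq, h, smul_zero])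
  have hγ0 : γ ≠ 0 := fun h => hq0 (dotProduct_self_eq_zero.mp (hq2.trans h))
  have hXdotq : ∀ w : Fin m → ℝ, (X1 *ᵥ w) ⬝ᵥ q = 0 := fun w => by
    rw [dotProduct_comm]; exact hqX1 w
  have hrq : r ⬝ᵥ q = α := by
    rw [hrdef, sub_dotProduct, hXdotq, sub_zero, dotProduct_comm]
  -- columns of XM
  have hcol : ∀ (t : Fin n) (i : Fin m), XM t i.castSucc = X1 t i := by
    intro t i; rw [hXMdef]; exact Fin.snoc_castSucc _ _ _
  have hcoll : ∀ t, XM t (Fin.last m) = xjk t := by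
    intro t; rw [hXMdef]; exact Fin.snoc_last _ _
  -- explicit inverse of XMᵀ * XM
  set N : Matrix (Fin (m + 1)) (Fin (m + 1)) ℝ :=
    Fin.snoc (fun i => Fin.snoc (fun j2 => Ai i j2 + u i * u j2 / γ) (-(u i) / γ))
      (Fin.snoc (fun j2 => -(u j2) / γ) (1 / γ)) with hNdef
  have hNcc : ∀ i j : Fin m, N i.castSucc j.castSucc = Ai i j + u i * u j / γ := by
    intro i j; rw [hNdef]; simp
  have hNcl : ∀ i : Fin m, N i.castSucc (Fin.last m) = -(u i) / γ := by
    intro i; rw [hNdef]; simp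
  have hNlc : ∀ j : Fin m, N (Fin.last m) j.castSucc = -(u j) / γ := by
    intro j; rw [hNdef]; simp
  have hNll : N (Fin.last m) (Fin.last m) = 1 / γ := by
    rw [hNdef]; simp
  have hGcc : ∀ i p : Fin m, (XMᵀ * XM) i.castSucc p.castSucc = (X1ᵀ * X1) i p := by
    intro i p
    rw [Matrix.mul_apply, Matrix.mul_apply]
    refine Finset.sum_congr rfl fun t _ => ?_
    rw [Matrix.transpose_apply, Matrix.transpose_apply, hcol, hcol]
  have hGcl : ∀ i : Fin m, (XMᵀ * XM) i.castSucc (Fin.last m) = b i := by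
    intro i
    rw [Matrix.mul_apply]
    simp only [Matrix.transpose_apply, hcol, hcoll]
    simp [hbdef, Matrix.mulVec, dotProduct]
  have hGlc : ∀ p : Fin m, (XMᵀ * XM) (Fin.last m) p.castSucc = b p := by
    intro p
    rw [Matrix.mul_apply]
    simp only [Matrix.transpose_apply, hcol, hcoll]
    simp [hbdef, Matrix.mulVec, dotProduct, mul_comm]
  have hGll : (XMᵀ * XM) (Fin.last m) (Fin.last m) = xjk ⬝ᵥ xjk := by
    rw [Matrix.mul_apply]
    simp only [Matrix.transpose_apply, hcoll]
    rfl
  have hγ' : xjk ⬝ᵥ xjk = γ + b ⬝ᵥ u := by rw [hγdef]; ring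
  have hright : (XMᵀ * XM) * N = 1 := by
    ext i j
    rw [Matrix.mul_apply, Fin.sum_univ_castSucc]
    induction i using Fin.lastCases with
    | last =>
      induction j using Fin.lastCases with
      | last =>
        simp only [hGlc, hGll, hNcl, hNll, Matrix.one_apply_eq]
        have h1 : ∀ p : Fin m, b p * (-(u p) / γ) = -(b p * u p) / γ := fun p => by ring
        rw [Finset.sum_congr rfl fun p _ => h1 p, ← Finset.sum_div]
        rw [Finset.sum_neg_distrib]
        have h2 : ∑ p, b p * u p = b ⬝ᵥ u := rfl
        rw [h2, hγ']
        field_simp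
        ring
      | cast j =>
        have hne : (Fin.last m) ≠ j.castSucc := (Fin.castSucc_lt_last j).ne'
        simp only [hGlc, hGll, hNcc, hNlc, Matrix.one_apply_ne hne]
        have h1 : ∀ p : Fin m, b p * (Ai p j + u p * u j / γ)
            = b p * Ai p j + b p * u p * (u j / γ) := fun p => by ring
        rw [Finset.sum_congr rfl fun p _ => h1 p, Finset.sum_add_distrib, ← Finset.sum_mul]
        have h2 : ∑ p, b p * Ai p j = u j := by
          have : ∑ p, b p * Ai p j = (b ᵥ* Ai) j := rfl
          rw [this, ← hAisym, vecMul_transpose]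
        have h3 : (∑ p, b p * u p) = b ⬝ᵥ u := rfl
        rw [h2, h3, hγ']
        field_simp
        ring
    | cast i =>
      induction j using Fin.lastCases with
      | last =>
        have hne : i.castSucc ≠ (Fin.last m) := (Fin.castSucc_lt_last i).ne
        simp only [hGcc, hGcl, hNcl, hNll, Matrix.one_apply_ne hne]
        have h1 : ∀ p : Fin m, (X1ᵀ * X1) i p * (-(u p) / γ)
            = -((X1ᵀ * X1) i p * u p) / γ := fun p => by ring
        rw [Finset.sum_congr rfl fun p _ => h1 p, ← Finset.sum_div]
        rw [Finset.sum_neg_distrib]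
        have h2 : ∑ p, (X1ᵀ * X1) i p * u p = b i := by
          have : ∑ p, (X1ᵀ * X1) i p * u p = ((X1ᵀ * X1) *ᵥ u) i := rfl
          rw [this, hAu]
        rw [h2]
        field_simp
        ring
      | cast j =>
        simp only [hGcc, hGcl, hNcc, hNcl, hNlc]
        have h1 : ∀ p : Fin m, (X1ᵀ * X1) i p * (Ai p j + u p * u j / γ)
            = (X1ᵀ * X1) i p * Ai p j + (X1ᵀ * X1) i p * u p * (u j / γ) := fun p => by ring
        rw [Finset.sum_congr rfl fun p _ => h1 p, Finset.sum_add_distrib, ← Finset.sum_mul]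
        have h2 : ∑ p, (X1ᵀ * X1) i p * Ai p j = (1 : Matrix (Fin m) (Fin m) ℝ) i j := by
          rw [← Matrix.mul_apply, hAA]
        have h3 : ∑ p, (X1ᵀ * X1) i p * u p = b i := by
          have : ∑ p, (X1ᵀ * X1) i p * u p = ((X1ᵀ * X1) *ᵥ u) i := rfl
          rw [this, hAu]
        have h4 : (1 : Matrix (Fin (m+1)) (Fin (m+1)) ℝ) i.castSucc j.castSucc
            = (1 : Matrix (Fin m) (Fin m) ℝ) i j := by
          simp [Matrix.one_apply, Fin.castSucc_inj]
        rw [h2, h3, h4]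
        ring
  have hNinv : (XMᵀ * XM)⁻¹ = N := Matrix.inv_eq_right_inv hright
  -- mulVec lemmas
  have hXMmv : ∀ (w : Fin m → ℝ) (c : ℝ), XM *ᵥ (Fin.snoc w c) = X1 *ᵥ w + c • xjk := by
    intro w c
    funext t
    simp only [Matrix.mulVec, dotProduct, Pi.add_apply, Pi.smul_apply, smul_eq_mul]
    rw [Fin.sum_univ_castSucc]
    simp only [Fin.snoc_castSucc, Fin.snoc_last, hcol, hcoll]
    ring
  have hXMT : ∀ z : Fin n → ℝ, XMᵀ *ᵥ z = Fin.snoc (X1ᵀ *ᵥ z) (xjk ⬝ᵥ z) := by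
    intro z
    funext p
    induction p using Fin.lastCases with
    | last =>
      rw [Fin.snoc_last]
      simp only [Matrix.mulVec, dotProduct, Matrix.transpose_apply, hcoll]
    | cast p =>
      rw [Fin.snoc_castSucc]
      simp only [Matrix.mulVec, dotProduct, Matrix.transpose_apply, hcol]
  have hNmv : ∀ (w : Fin m → ℝ) (c : ℝ), N *ᵥ (Fin.snoc w c) =
      Fin.snoc (Ai *ᵥ w - ((c - u ⬝ᵥ w) / γ) • u) ((c - u ⬝ᵥ w) / γ) := by
    intro w c
    funext p
    induction p using Fin.lastCases with
    | last =>
      rw [Fin.snoc_last]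
      simp only [Matrix.mulVec, dotProduct]
      rw [Fin.sum_univ_castSucc]
      simp only [Fin.snoc_castSucc, Fin.snoc_last, hNlc, hNll]
      have h1 : ∀ p2 : Fin m, -(u p2) / γ * w p2 = -(u p2 * w p2) / γ := fun p2 => by ring
      rw [Finset.sum_congr rfl fun p2 _ => h1 p2, ← Finset.sum_div, Finset.sum_neg_distrib]
      have h2 : ∑ p2, u p2 * w p2 = u ⬝ᵥ w := rfl
      rw [h2]; ring
    | cast i =>
      rw [Fin.snoc_castSucc]
      simp only [Matrix.mulVec, dotProduct]
      rw [Fin.sum_univ_castSucc]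
      simp only [Fin.snoc_castSucc, Fin.snoc_last, hNcc, hNcl, Pi.sub_apply, Pi.smul_apply,
        smul_eq_mul]
      have h1 : ∀ p2 : Fin m, (Ai i p2 + u i * u p2 / γ) * w p2
          = Ai i p2 * w p2 + u p2 * w p2 * (u i / γ) := fun p2 => by ring
      rw [Finset.sum_congr rfl fun p2 _ => h1 p2, Finset.sum_add_distrib, ← Finset.sum_mul]
      have h2 : ∑ p2, Ai i p2 * w p2 = (Ai *ᵥ w) i := rfl
      have h3 : ∑ p2, u p2 * w p2 = u ⬝ᵥ w := rfl
      rw [h2, h3]; ring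
  have hXMN : ∀ (w : Fin m → ℝ) (c : ℝ),
      (XM * N) *ᵥ (Fin.snoc w c) = X1 *ᵥ (Ai *ᵥ w) + ((c - u ⬝ᵥ w) / γ) • q := by
    intro w c
    rw [← mulVec_mulVec, hNmv, hXMmv, mulVec_sub, mulVec_smul, hqdef, smul_sub]
    abel
  -- PM *ᵥ xj
  have hub : (X1 *ᵥ u) ⬝ᵥ xj = u ⬝ᵥ bj := by
    rw [dotProduct_comm, dotProduct_mulVec, ← mulVec_transpose, dotProduct_comm]
  have hαbj : xjk ⬝ᵥ xj - u ⬝ᵥ bj = α := by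
    rw [hαdef, hqdef, sub_dotProduct, hub]
  have hPMxj : PM *ᵥ xj = X1 *ᵥ (Ai *ᵥ bj) + (α / γ) • q := by
    rw [hPM, hNinv, ← mulVec_mulVec, hXMT, hXMN, hαbj]
  have hck1r : ck1 = dM⁻¹ • (r - (α / γ) • q) := by
    rw [hck1, sub_mulVec, one_mulVec, hPMxj, hrdef]
    congr 1
    abel
  -- dk, dM
  have hdk' : dk = sk - u ⬝ᵥ s1 := by
    rw [hdk, ← mulVec_mulVec, dotProduct_mulVec, ← mulVec_transpose, hAidot]
  have hdM' : dM = dj - dk * α / γ := by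
    rw [hdM, hsM, hNinv, hXMN, dotProduct_add, dotProduct_smul, smul_eq_mul,
      dotProduct_comm xj q, hdj, ← mulVec_mulVec, ← hdk']
    ring
  -- θ
  have hθval : θ = dk * α / (dj * γ) := by
    rw [hθ, hckr, hckkq, smul_dotProduct, dotProduct_smul, smul_dotProduct, dotProduct_smul,
      hrq, hq2, smul_eq_mul, smul_eq_mul, smul_eq_mul, smul_eq_mul]
    field_simp
  -- final computation
  subst hθval
  subst hdM'
  rw [hckr, hckkq, hck1r]
  have hkey : dj * γ - dk * α ≠ 0 := by
    intro h
    apply hdM0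
    have : dj - dk * α / γ = (dj * γ - dk * α) / γ := by field_simp
    rw [this, h, zero_div]
  have h1θ : (1 : ℝ) - dk * α / (dj * γ) ≠ 0 := sub_ne_zero.mpr (Ne.symm hθ1)
  funext t
  simp only [Pi.smul_apply, Pi.sub_apply, smul_eq_mul]
  field_simp
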